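/- Mean lower-bound correctness: let S1 be a nonempty finite multiset of reals and S2 a finite multiset of reals with elements s_1 ≥ ... ≥ s_k in descending order. For every sub-multiset T ⊆ S2, the mean of S1 ∪ T is at least min_{0 ≤ i ≤ k} ( (Σ_{s∈S1} s + Σ_{k−i < j ≤ k} s_j) / (|S1| + i) ), i.e., the minimum over adding suffixes (the i smallest elements) of the descending order. -/

import Mathlib

lemma suffix_sum_le (l : List ℝ) (hl : List.Pairwise (· ≥ ·) l) :
    ∀ T : Multiset ℝ, T ≤ (l : Multiset ℝ) →
      (l.drop (l.length - Multiset.card T)).sum ≤ T.sum := by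
  induction l with
  | nil =>
    intro T hT
    have : T = 0 := le_antisymm hT (Multiset.zero_le T)
    simp [this]
  | cons a l ih =>
    intro T hT
    rcases List.pairwise_cons.mp hl with ⟨ha, hl'⟩
    by_cases hmem : a ∈ T
    · have hT' : T.erase a ≤ (l : Multiset ℝ) := by
        have := Multiset.erase_le_erase (a := a) hT
        simpa using this
      have hcard : Multiset.card T = Multiset.card (T.erase a) + 1 := by
        rw [Multiset.card_erase_of_mem hmem]
        exact (Nat.succ_pred_eq_of_pos (Multiset.card_pos.mpr
          (fun h => by simp [h] at hmem))).symm
      set i := Multiset.card (T.erase a) with hi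
      have hsum : T.sum = a + (T.erase a).sum := by
        rw [← Multiset.sum_cons, Multiset.cons_erase hmem]
      have hile : i ≤ l.length := by
        have := Multiset.card_le_card hT'
        simpa using this
      rcases eq_or_lt_of_le hile with heq | hlt
      · -- T.erase a = l
        have : T.erase a = (l : Multiset ℝ) := Multiset.eq_of_le_of_card_le hT' (by simpa using heq.ge)
        have hdrop : (a :: l).length - Multiset.card T = 0 := by
          simp only [List.length_cons, hcard]; omega
        rw [hdrop]
        simp [hsum, this]
      · set m := l.length - i - 1 with hm
        have hdrop : (a :: l).length - Multiset.card T = m + 1 := by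
          simp only [List.length_cons, hcard]; omega
        rw [hdrop, List.drop_succ_cons]
        have hmlt : m < l.length := by omega
        rw [List.drop_eq_getElem_cons hmlt]
        have h1 : l[m] ≤ a := ha _ (List.getElem_mem hmlt)
        have h2 : (l.drop (m + 1)).sum ≤ (T.erase a).sum := by
          have he : m + 1 = l.length - Multiset.card (T.erase a) := by omega
          rw [he]
          exact ih hl' _ hT'
        simp only [List.sum_cons, hsum]
        linarith
    · have hT' : T ≤ (l : Multiset ℝ) := by
        rcases Multiset.le_iff_count.mp hT with h
        refine Multiset.le_iff_count.mpr fun b => ?_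
        by_cases hb : b = a
        · subst hb; simp [Multiset.count_eq_zero_of_notMem hmem]
        · have := h b
          simpa [Multiset.count_cons, List.count_cons, hb, Ne.symm hb] using this
      have hcle : Multiset.card T ≤ l.length := by
        have := Multiset.card_le_card hT'; simpa using this
      have hdrop : (a :: l).length - Multiset.card T = (l.length - Multiset.card T) + 1 := by
        simp; omega
      rw [hdrop, List.drop_succ_cons]
      exact ih hl' T hT'

theorem stmt18 (S1 T : Multiset ℝ) (l : List ℝ) (hl : List.Pairwise (· ≥ ·) l)
    (hS1 : S1 ≠ 0) (hT : T ≤ (l : Multiset ℝ)) :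
    ∃ i ≤ l.length,
      (S1.sum + (l.drop (l.length - i)).sum) / (((Multiset.card S1 : ℕ) : ℝ) + (i : ℝ)) ≤
        (S1 + T).sum / ((Multiset.card (S1 + T) : ℕ) : ℝ) := by
  refine ⟨Multiset.card T, by simpa using Multiset.card_le_card hT, ?_⟩
  have hsum := suffix_sum_le l hl T hT
  have hcard : ((Multiset.card (S1 + T) : ℕ) : ℝ)
      = ((Multiset.card S1 : ℕ) : ℝ) + ((Multiset.card T : ℕ) : ℝ) := by push_cast [Multiset.card_add]; ring
  rw [hcard, Multiset.sum_add]
  have hpos : (0 : ℝ) < ((Multiset.card S1 : ℕ) : ℝ) + ((Multiset.card T : ℕ) : ℝ) := by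
    have : 0 < Multiset.card S1 := Multiset.card_pos.mpr hS1
    positivity
  gcongr
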